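/- Let n ≥ r ≥ 2 and let A be an n×n complex matrix with all entries of absolute value at most 1. If A is r-partite (i.e., there is a partition of the index set [n] into r sets N_1,...,N_r such that all entries of A with both indices in the same part N_i are zero), then the sum of the singular values of A is at most n^(3/2) · sqrt(1 - 1/r). -/

import Mathlib

open Matrix BigOperators

/-- The singular values of a square matrix `A` over an `RCLike` field: the square roots of the
eigenvalues of the Hermitian matrix `A * Aᴴ`. -/
noncomputable def singularValues {𝕜 : Type*} [RCLike 𝕜] {m : Type*} [Fintype m] [DecidableEq m]
    (A : Matrix m m 𝕜) : m → ℝ :=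
  fun i => Real.sqrt ((Matrix.isHermitian_mul_conjTranspose_self A).eigenvalues i)

/-- The trace norm (nuclear norm) of a square matrix: the sum of its singular values. -/
noncomputable def traceNorm {𝕜 : Type*} [RCLike 𝕜] {m : Type*} [Fintype m] [DecidableEq m]
    (A : Matrix m m 𝕜) : ℝ :=
  ∑ i, singularValues A i

lemma sum_eigs_eq_trace_aux {m : Type*} [Fintype m] [DecidableEq m]
    {B : Matrix m m ℂ} (hB : B.IsHermitian) :
    ((∑ i, hB.eigenvalues i : ℝ) : ℂ) = B.trace := by
  conv_rhs => rw [hB.spectral_theorem]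
  rw [Unitary.conjStarAlgAut_apply, Matrix.trace_mul_cycle, Unitary.coe_star_mul_self, one_mul, Matrix.trace_diagonal]
  push_cast
  rfl

/-- if `n ≥ r ≥ 2` and `A` is an `n × n` complex `r`-partite matrix with all
entries of absolute value at most `1`, then `‖A‖_* ≤ n^(3/2) √(1 - 1/r)`. -/
theorem trace_norm_r_partite_matrix_le {n r : ℕ} (hr : 2 ≤ r) (hn : r ≤ n)
    (A : Matrix (Fin n) (Fin n) ℂ)
    (hbd : ∀ i j, ‖A i j‖ ≤ 1)
    (p : Fin n → Fin r)
    (hpart : ∀ i j, p i = p j → A i j = 0) :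
    traceNorm A ≤ (n : ℝ) ^ (3 / 2 : ℝ) * Real.sqrt (1 - 1 / r) := by
  have hr0 : (0:ℝ) < r := by positivity
  set H := Matrix.isHermitian_mul_conjTranspose_self A with hH
  have hev : ∀ i, 0 ≤ H.eigenvalues i := fun i =>
    Matrix.eigenvalues_self_mul_conjTranspose_nonneg A i
  -- sum of eigenvalues equals Frobenius norm squared
  have key : ∑ i, H.eigenvalues i = ∑ i, ∑ j, Complex.normSq (A i j) := by
    apply Complex.ofReal_injective
    rw [sum_eigs_eq_trace_aux H]
    simp only [Matrix.trace, Matrix.diag, Matrix.mul_apply, Matrix.conjTranspose_apply,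
      RCLike.star_def, Complex.mul_conj]
    push_cast
    rfl
  -- pointwise bound on entries
  have hpt : ∀ i j, Complex.normSq (A i j) ≤ if p i = p j then (0:ℝ) else 1 := by
    intro i j
    by_cases h : p i = p j
    · simp [hpart i j h, h]
    · simp only [h, if_false]
      rw [← Complex.sq_norm]
      have := hbd i j
      nlinarith [norm_nonneg (A i j)]
  -- fiber sizes
  set c : Fin r → ℕ := fun k => (Finset.univ.filter (fun i => p i = k)).card with hc
  have hcsum : ∑ k, c k = n := by
    rw [← Finset.card_eq_sum_card_fiberwise (fun i _ => Finset.mem_univ (p i))]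
    simp
  have hrow : ∀ i, ∑ j, (if p i = p j then (0:ℝ) else 1) = n - c (p i) := by
    intro i
    have heq : ∀ j : Fin n, (if p i = p j then (0:ℝ) else 1)
        = 1 - (if p j = p i then (1:ℝ) else 0) := by
      intro j
      by_cases h : p i = p j
      · rw [if_pos h, if_pos h.symm]; ring
      · rw [if_neg h, if_neg (fun h' : p j = p i => h h'.symm)]; ring
    simp only [heq, Finset.sum_sub_distrib, Finset.sum_const, Finset.card_univ,
      Fintype.card_fin, nsmul_eq_mul, mul_one, Finset.sum_boole]
    rfl
  have hdiag : ∑ i, (c (p i) : ℝ) = ∑ k, (c k : ℝ) * (c k : ℝ) := by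
    rw [← Finset.sum_fiberwise_of_maps_to (fun i (_ : i ∈ Finset.univ) => Finset.mem_univ (p i))
      (fun i => (c (p i) : ℝ))]
    refine Finset.sum_congr rfl fun k _ => ?_
    have heq : ∀ i ∈ Finset.univ.filter (fun i => p i = k), (c (p i) : ℝ) = (c k : ℝ) := by
      intro i hi
      rw [(Finset.mem_filter.mp hi).2]
    rw [Finset.sum_congr rfl heq, Finset.sum_const, nsmul_eq_mul]
  have hcs : (n:ℝ)^2 ≤ r * ∑ k, (c k : ℝ)^2 := by
    have := sq_sum_le_card_mul_sum_sq (s := (Finset.univ : Finset (Fin r)))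
      (f := fun k => (c k : ℝ))
    have h1 : ∑ k, (c k : ℝ) = n := by exact_mod_cast hcsum
    simpa [h1, Finset.card_univ] using this
  have hsum_bound : ∑ i, ∑ j, Complex.normSq (A i j) ≤ (n:ℝ)^2 * (1 - 1/r) := by
    calc ∑ i, ∑ j, Complex.normSq (A i j)
        ≤ ∑ i, ∑ j, (if p i = p j then (0:ℝ) else 1) := by
          apply Finset.sum_le_sum; intro i _
          exact Finset.sum_le_sum fun j _ => hpt i j
      _ = ∑ i : Fin n, ((n:ℝ) - c (p i)) := Finset.sum_congr rfl fun i _ => hrow i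
      _ = (n:ℝ)^2 - ∑ k, (c k : ℝ)^2 := by
          rw [Finset.sum_sub_distrib, hdiag]
          simp [sq]
      _ ≤ (n:ℝ)^2 * (1 - 1/r) := by
          have h2 : (n:ℝ)^2 / r ≤ ∑ k, (c k : ℝ)^2 := by
            rw [div_le_iff₀ hr0, mul_comm]; exact hcs
          have : (n:ℝ)^2 * (1 - 1/r) = (n:ℝ)^2 - (n:ℝ)^2 / r := by ring
          linarith
  -- Cauchy-Schwarz on singular values
  have hsv : ∀ i, 0 ≤ singularValues A i := fun i => Real.sqrt_nonneg _
  have hCS : (traceNorm A)^2 ≤ (n:ℝ) * ∑ i, H.eigenvalues i := by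
    have := sq_sum_le_card_mul_sum_sq (s := (Finset.univ : Finset (Fin n)))
      (f := singularValues A)
    have h3 : ∀ i, (singularValues A i)^2 = H.eigenvalues i := fun i =>
      Real.sq_sqrt (hev i)
    simpa [traceNorm, Finset.card_univ, h3] using this
  have htn : 0 ≤ traceNorm A := Finset.sum_nonneg fun i _ => hsv i
  have hfinal : (traceNorm A)^2 ≤ (n:ℝ)^3 * (1 - 1/r) := by
    have := key ▸ hCS
    have hb : (n:ℝ) * ((n:ℝ)^2 * (1 - 1/r)) = (n:ℝ)^3 * (1 - 1/r) := by ring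
    nlinarith [hsum_bound, Nat.cast_nonneg (α := ℝ) n]
  have h1r : (0:ℝ) ≤ 1 - 1/r := by
    rw [sub_nonneg]
    rw [div_le_one hr0]
    exact_mod_cast Nat.one_le_of_lt hr
  calc traceNorm A = Real.sqrt ((traceNorm A)^2) := (Real.sqrt_sq htn).symm
    _ ≤ Real.sqrt ((n:ℝ)^3 * (1 - 1/r)) := Real.sqrt_le_sqrt hfinal
    _ = Real.sqrt ((n:ℝ)^3) * Real.sqrt (1 - 1/r) := Real.sqrt_mul (by positivity) _
    _ = (n:ℝ) ^ (3/2 : ℝ) * Real.sqrt (1 - 1/r) := by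
        congr 1
        rw [Real.sqrt_eq_rpow, ← Real.rpow_natCast (n:ℝ) 3, ← Real.rpow_mul (Nat.cast_nonneg n)]
        norm_num
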